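/- Let λ_1 > 0, α_1 > 1 be reals, λ_2, α_2 ∈ ℂ with 0 < |α_2| < α_1 and |λ_2 α_2| < λ_1 α_1, and suppose a_n := λ_1 α_1^n + λ_2 α_2^n is a positive integer for all n ≥ 1 (a degree-2 Lucas-type sequence). Then for |z| < α_1^{Re(s)}: ∑_{n=1}^∞ z^n a_n^{-s} = ∑_{k=0}^∞ C(-s,k) λ_1^{-s-k} λ_2^{k} / (z^{-1} α_1^{s+k} α_2^{-k} - 1), the right-hand series converging whenever z^{-1} α_1^{s+k} α_2^{-k} ≠ 1 for all k ≥ 0. -/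

import Mathlib

open Complex Filter Topology

/-- Generalized binomial coefficient `C(a, j) = a(a-1)⋯(a-j+1)/j!` for complex `a`. -/
noncomputable def cbinom (a : ℂ) (j : ℕ) : ℂ :=
  (∏ i ∈ Finset.range j, (a - i)) / (j.factorial : ℂ)

lemma cbinom_zero (w : ℂ) : cbinom w 0 = 1 := by simp [cbinom]

lemma cbinom_succ (w : ℂ) (k : ℕ) :
    ((k : ℂ) + 1) * cbinom w (k + 1) = (w - k) * cbinom w k := by
  unfold cbinom
  rw [Finset.prod_range_succ, Nat.factorial_succ]
  have h1 : (k.factorial : ℂ) ≠ 0 := Nat.cast_ne_zero.2 k.factorial_ne_zero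
  have h2 : ((k : ℂ) + 1) ≠ 0 := Nat.cast_add_one_ne_zero k
  push_cast
  field_simp

lemma cbinom_norm_le (w : ℂ) (k : ℕ) :
    ‖cbinom w k‖ ≤ ((k + ⌈‖w‖⌉₊).choose ⌈‖w‖⌉₊ : ℝ) := by
  set M := ⌈‖w‖⌉₊ with hM
  have hprod : ‖∏ i ∈ Finset.range k, (w - i)‖ ≤ ((M + 1).ascFactorial k : ℝ) := by
    rw [norm_prod]
    have : ((M + 1).ascFactorial k : ℝ) = ∏ i ∈ Finset.range k, ((M + 1 + i : ℕ) : ℝ) := by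
      induction k with
      | zero => simp
      | succ n ih =>
        rw [Nat.ascFactorial_succ, Finset.prod_range_succ, ← ih]
        push_cast
        ring
    rw [this]
    apply Finset.prod_le_prod (fun i _ => norm_nonneg _)
    intro i _
    calc ‖w - i‖ ≤ ‖w‖ + ‖(i : ℂ)‖ := norm_sub_le _ _
      _ ≤ (M : ℝ) + 1 + i := by
          have h1 : ‖w‖ ≤ (M : ℝ) := Nat.le_ceil _
          have h2 : ‖(i : ℂ)‖ = (i : ℝ) := by
            simp [Complex.norm_natCast]
          rw [h2]; linarith
      _ = ((M + 1 + i : ℕ) : ℝ) := by push_cast; ring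
  have hfac : ((M + 1).ascFactorial k : ℝ) = (k.factorial : ℝ) * ((M + k).choose k : ℝ) := by
    rw_mod_cast [Nat.ascFactorial_eq_factorial_mul_choose]
  have hnorm : ‖cbinom w k‖ = ‖∏ i ∈ Finset.range k, (w - i)‖ / (k.factorial : ℝ) := by
    rw [cbinom, norm_div]
    norm_cast
  rw [hnorm]
  rw [div_le_iff₀ (by positivity : (0:ℝ) < (k.factorial : ℝ))]
  calc ‖∏ i ∈ Finset.range k, (w - i)‖ ≤ ((M + 1).ascFactorial k : ℝ) := hprod
    _ = ((M + k).choose k : ℝ) * (k.factorial : ℝ) := by rw [hfac]; ring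
    _ = ((k + M).choose M : ℝ) * (k.factorial : ℝ) := by
        congr 2
        rw [← Nat.choose_symm (Nat.le_add_left k M)]
        congr 1
        · omega
        · omega

lemma summable_cbinom_norm (w : ℂ) {r : ℝ} (h0 : 0 ≤ r) (hr : r < 1) :
    Summable (fun k => ‖cbinom w k‖ * r ^ k) := by
  set M := ⌈‖w‖⌉₊
  have hs : Summable (fun k : ℕ => ((k + M).choose M : ℝ) * r ^ k) :=
    summable_choose_mul_geometric_of_norm_lt_one M
      (by rwa [Real.norm_eq_abs, _root_.abs_of_nonneg h0])
  apply Summable.of_nonneg_of_le (fun k => by positivity) _ hs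
  intro k
  exact mul_le_mul_of_nonneg_right (cbinom_norm_le w k) (by positivity)

noncomputable def binomialP (w : ℂ) : FormalMultilinearSeries ℂ ℂ ℂ :=
  FormalMultilinearSeries.ofScalars ℂ (cbinom w)

lemma one_le_radius_binomialP (w : ℂ) : 1 ≤ (binomialP w).radius := by
  apply ENNReal.le_of_forall_nnreal_lt
  intro r hr
  apply FormalMultilinearSeries.le_radius_of_summable_norm
  have hr' : (r : ℝ) < 1 := by exact_mod_cast hr
  have hnorm : ∀ n, ‖(binomialP w) n‖ = ‖cbinom w n‖ := fun n =>
    FormalMultilinearSeries.ofScalars_norm ℂ (cbinom w) n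
  simp only [hnorm]
  exact summable_cbinom_norm w r.coe_nonneg hr'

theorem hasSum_cbinom (w x : ℂ) (hx : ‖x‖ < 1) :
    HasSum (fun k => cbinom w k * x ^ k) ((1 + x) ^ w) := by
  set p := binomialP w with hp_def
  set g := p.sum with hg_def
  have hrad : 0 < p.radius := lt_of_lt_of_le one_pos (one_le_radius_binomialP w)
  have hp : HasFPowerSeriesOnBall g p 0 1 :=
    (p.hasFPowerSeriesOnBall hrad).mono one_pos (one_le_radius_binomialP w)
  have hball : ∀ {y : ℂ}, ‖y‖ < 1 → y ∈ Metric.eball (0 : ℂ) 1 := by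
    intro y hy
    rw [mem_emetric_ball_zero_iff, enorm_eq_nnnorm]
    exact_mod_cast hy
  have hgsum : ∀ {y : ℂ}, ‖y‖ < 1 → HasSum (fun n => cbinom w n * y ^ n) (g y) := by
    intro y hy
    have h0 := hp.hasSum (hball hy)
    rw [zero_add] at h0
    have heq0 : (fun n => p n fun _ => y) = fun n => cbinom w n * y ^ n := by
      funext n
      simpa [smul_eq_mul, hp_def, binomialP, FormalMultilinearSeries.coeff_ofScalars, mul_comm] using FormalMultilinearSeries.ofScalars_apply_eq (cbinom w) y n
    rwa [heq0] at h0
  -- derivative series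
  have hderiv : ∀ {y : ℂ}, ‖y‖ < 1 →
      HasSum (fun n : ℕ => ((n : ℂ) + 1) * cbinom w (n + 1) * y ^ n) (deriv g y) := by
    intro y hy
    have h1 := (hp.fderiv).hasSum (hball hy)
    have h2 := h1.mapL (ContinuousLinearMap.apply ℂ ℂ (1 : ℂ))
    have hterm : ∀ n : ℕ, (p.derivSeries n fun _ => y) 1
        = ((n : ℂ) + 1) * cbinom w (n + 1) * y ^ n := by
      intro n
      have hmulti : (p.derivSeries n fun _ => y) = y ^ n • (p.derivSeries n fun _ => (1 : ℂ)) := by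
        have := (p.derivSeries n).map_smul_univ (fun _ => y) (fun _ => (1 : ℂ))
        simpa [smul_eq_mul] using this
      have hdiag := p.derivSeries_apply_diag n 1
      have hofs : (p (n + 1) fun _ => (1 : ℂ)) = cbinom w (n + 1) := by
        simpa [hp_def, binomialP, FormalMultilinearSeries.coeff_ofScalars] using FormalMultilinearSeries.ofScalars_apply_eq (cbinom w) (1 : ℂ) (n + 1)
      rw [hmulti]
      simp only [ContinuousLinearMap.smul_apply, smul_eq_mul]
      rw [hdiag, hofs]
      push_cast [nsmul_eq_mul]
      ring
    have heq : (fun n => (ContinuousLinearMap.apply ℂ ℂ (1 : ℂ)) (p.derivSeries n fun _ => y))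
        = fun n : ℕ => ((n : ℂ) + 1) * cbinom w (n + 1) * y ^ n := by
      funext n
      simpa using hterm n
    rw [heq] at h2
    rw [zero_add] at h2
    simpa only [ContinuousLinearMap.apply_apply, fderiv_apply_one_eq_deriv] using h2
  -- ODE
  have hode : ∀ {y : ℂ}, ‖y‖ < 1 → (1 + y) * deriv g y = w * g y := by
    intro y hy
    have hd := hderiv hy
    have hd2 : HasSum (fun n : ℕ => (n : ℂ) * cbinom w n * y ^ n) (y * deriv g y) := by
      have h3 := hd.mul_left y
      have h4 : HasSum (fun n : ℕ => (((n + 1 : ℕ) : ℂ)) * cbinom w (n + 1) * y ^ (n + 1))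
          (y * deriv g y) := by
        convert h3 using 2 with n
        case e'_3 => rfl
        push_cast
        ring
      have h5 : HasSum (fun n : ℕ => (n : ℂ) * cbinom w n * y ^ n)
          (y * deriv g y + ∑ i ∈ Finset.range 1, (i : ℂ) * cbinom w i * y ^ i) :=
        (hasSum_nat_add_iff (f := fun n : ℕ => (n : ℂ) * cbinom w n * y ^ n) 1).mp h4
      simpa using h5
    have hsum := hd.add hd2
    have heq2 : (fun n : ℕ => ((n : ℂ) + 1) * cbinom w (n + 1) * y ^ n
        + (n : ℂ) * cbinom w n * y ^ n) = fun n : ℕ => w * (cbinom w n * y ^ n) := by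
      funext n
      have h := cbinom_succ w n
      linear_combination y ^ n * h
    rw [heq2] at hsum
    have hg2 := (hgsum hy).mul_left w
    have := hsum.unique hg2
    calc (1 + y) * deriv g y = deriv g y + y * deriv g y := by ring
      _ = w * g y := this
  -- constancy of F
  have hF : ∀ y ∈ Metric.ball (0 : ℂ) 1, g y * (1 + y) ^ (-w) = 1 := by
    set F := fun y : ℂ => g y * (1 + y) ^ (-w) with hF_def
    have key : ∀ y ∈ Metric.ball (0 : ℂ) 1, HasDerivAt F 0 y := by
      intro y hy
      have hy' : ‖y‖ < 1 := by simpa [Metric.mem_ball, dist_zero_right] using hy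
      have h1y : (1 : ℂ) + y ≠ 0 := by
        intro h
        have : y = -1 := by linear_combination h
        rw [this] at hy'
        simp at hy'
      have hre : 0 < (1 + y).re := by
        have h1 : |y.re| ≤ ‖y‖ := Complex.abs_re_le_norm y
        have h2 : ‖y‖ < 1 := hy'
        simp only [Complex.add_re, Complex.one_re]
        have := abs_le.1 h1
        linarith
      have hslit : (1 + y) ∈ Complex.slitPlane := Complex.mem_slitPlane_iff.2 (Or.inl hre)
      have hgd : HasDerivAt g (deriv g y) y :=
        ((hp.analyticAt_of_mem (by simpa [Metric.mem_eball, edist_zero_right] using hball hy')).differentiableAt).hasDerivAt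
      have hpow : HasDerivAt (fun y : ℂ => (1 + y) ^ (-w)) (-w * (1 + y) ^ (-w - 1) * 1) y :=
        HasDerivAt.cpow_const ((hasDerivAt_id y).const_add 1) hslit
      have hmul := hgd.mul hpow
      have hzero : deriv g y * (1 + y) ^ (-w) + g y * (-w * (1 + y) ^ (-w - 1) * 1) = 0 := by
        have hsplit : (1 + y) ^ (-w) = (1 + y) ^ (-w - 1) * (1 + y) := by
          have : (1 + y) ^ ((-w - 1) + 1) = (1 + y) ^ (-w - 1) * (1 + y) ^ (1 : ℂ) :=
            cpow_add _ _ h1y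
          rw [cpow_one] at this
          simpa using this
        rw [hsplit]
        have h := hode hy'
        linear_combination (1 + y) ^ (-w - 1) * h
      rw [hzero] at hmul
      exact hmul
    intro y hy
    have hdiff : DifferentiableOn ℂ F (Metric.ball 0 1) := fun z hz =>
      ((key z hz).differentiableAt).differentiableWithinAt
    have hconst := Convex.is_const_of_fderivWithin_eq_zero (convex_ball (0 : ℂ) 1) hdiff
      (fun z hz => by
        rw [fderivWithin_of_isOpen Metric.isOpen_ball hz]
        apply ContinuousLinearMap.ext_ring
        rw [fderiv_apply_one_eq_deriv, (key z hz).deriv]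
        simp)
      hy (Metric.mem_ball_self one_pos)
    have hF0 : F 0 = 1 := by
      have hg0 : g 0 = 1 := by
        have h1 := hgsum (y := 0) (by simp)
        have h2 : (fun n => cbinom w n * (0 : ℂ) ^ n) = fun n => if n = 0 then (1 : ℂ) else 0 := by
          funext n
          cases n with
          | zero => simp [cbinom_zero]
          | succ m => simp
        rw [h2] at h1
        exact h1.unique (hasSum_ite_eq 0 1)
      simp [hF_def, hg0]
    exact hconst.trans hF0
  -- conclude
  have hx1 : (1 : ℂ) + x ≠ 0 := by
    intro h
    have : x = -1 := by linear_combination h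
    rw [this] at hx
    simp at hx
  have hxw : (1 + x) ^ w ≠ 0 := by
    rw [Ne, cpow_eq_zero_iff]
    tauto
  have hFx := hF x (by simpa [Metric.mem_ball, dist_zero_right] using hx)
  rw [cpow_neg, mul_inv_eq_one₀ hxw] at hFx
  exact hFx ▸ hgsum hx

section Helpers

lemma ofReal_mul_cpow' {r : ℝ} (hr : 0 < r) {v : ℂ} (hv : v ≠ 0) (t : ℂ) :
    ((r : ℂ) * v) ^ t = (r : ℂ) ^ t * v ^ t := by
  have hr0 : (r : ℂ) ≠ 0 := Complex.ofReal_ne_zero.2 hr.ne'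
  rw [Complex.cpow_def_of_ne_zero (mul_ne_zero hr0 hv), Complex.cpow_def_of_ne_zero hr0,
    Complex.cpow_def_of_ne_zero hv, Complex.log_ofReal_mul hr hv, ← Complex.exp_add]
  congr 1
  rw [← Complex.ofReal_log hr.le]
  ring

lemma cpow_nat_pow' {x : ℝ} (hx : 0 < x) (m : ℕ) (t : ℂ) :
    ((x : ℂ) ^ m) ^ t = (x : ℂ) ^ ((m : ℂ) * t) := by
  have h2 : (0 : ℝ) < x ^ m := pow_pos hx m
  have h1 : ((x : ℂ)) ^ m = ((x ^ m : ℝ) : ℂ) := by push_cast; ring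
  rw [h1, Complex.cpow_def_of_ne_zero (Complex.ofReal_ne_zero.2 h2.ne'),
    Complex.cpow_def_of_ne_zero (Complex.ofReal_ne_zero.2 hx.ne'),
    ← Complex.ofReal_log h2.le, ← Complex.ofReal_log hx.le, Real.log_pow]
  congr 1
  push_cast
  ring

end Helpers


theorem lerch_series_formula_degree_two
    (lam1 α1 : ℝ) (hlam1 : 0 < lam1) (hα1 : 1 < α1)
    (lam2 α2 : ℂ) (hα2 : 0 < ‖α2‖) (hα2' : ‖α2‖ < α1)
    (hdom : ‖lam2 * α2‖ < lam1 * α1)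
    (a : ℕ → ℕ) (hpos : ∀ n, 1 ≤ n → 0 < a n)
    (hBinet : ∀ n : ℕ, 1 ≤ n →
      (a n : ℂ) = (lam1 : ℂ) * (α1 : ℂ) ^ n + lam2 * α2 ^ n)
    (s z : ℂ) (hz0 : z ≠ 0) (hz : ‖z‖ < α1 ^ s.re)
    (hne : ∀ k : ℕ, z⁻¹ * (α1 : ℂ) ^ (s + (k : ℂ)) * α2 ^ (-(k : ℤ)) ≠ 1) :
    Summable (fun k : ℕ => cbinom (-s) k * (lam1 : ℂ) ^ (-s - (k : ℂ)) * lam2 ^ k /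
        (z⁻¹ * (α1 : ℂ) ^ (s + (k : ℂ)) * α2 ^ (-(k : ℤ)) - 1)) ∧
    ∑' n : ℕ, z ^ (n + 1) * ((a (n + 1) : ℂ)) ^ (-s) =
      ∑' k : ℕ, cbinom (-s) k * (lam1 : ℂ) ^ (-s - (k : ℂ)) * lam2 ^ k /
        (z⁻¹ * (α1 : ℂ) ^ (s + (k : ℂ)) * α2 ^ (-(k : ℤ)) - 1) := by
  have hα1pos : (0 : ℝ) < α1 := lt_trans zero_lt_one hα1
  have hα2ne : α2 ≠ 0 := by
    intro h; rw [h] at hα2; simp at hα2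
  have hα1C : (α1 : ℂ) ≠ 0 := Complex.ofReal_ne_zero.2 hα1pos.ne'
  have hlam1C : (lam1 : ℂ) ≠ 0 := Complex.ofReal_ne_zero.2 hlam1.ne'
  have hzabs : 0 < ‖z‖ := norm_pos_iff.mpr hz0
  -- basic real quantities
  set q : ℝ := ‖α2‖ / α1 with hq_def
  have hq0 : 0 < q := div_pos hα2 hα1pos
  have hq1 : q < 1 := (div_lt_one hα1pos).2 hα2'
  set D : ℝ := ‖lam2 * α2‖ / (lam1 * α1) with hD_def
  have hD0 : 0 ≤ D := div_nonneg (norm_nonneg _) (by positivity)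
  have hD1 : D < 1 := (div_lt_one (by positivity)).2 hdom
  set A : ℝ := α1 ^ (-s.re) with hA_def
  have hA0 : 0 < A := Real.rpow_pos_of_pos hα1pos _
  set ε : ℝ := ‖z‖ * A with hε_def
  have hε0 : 0 < ε := mul_pos hzabs hA0
  have hε1 : ε < 1 := by
    have h := mul_lt_mul_of_pos_right hz hA0
    rwa [hA_def, ← Real.rpow_add hα1pos, add_neg_cancel, Real.rpow_zero] at h
  -- the complex quantities
  set CR : ℕ → ℂ := fun n => ((lam1 * α1 ^ (n + 1) : ℝ) : ℂ) with hCR_def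
  have hRpos : ∀ n : ℕ, (0 : ℝ) < lam1 * α1 ^ (n + 1) := fun n => by positivity
  have hCRne : ∀ n, CR n ≠ 0 := fun n => Complex.ofReal_ne_zero.2 (hRpos n).ne'
  set X : ℕ → ℂ := fun n => lam2 * α2 ^ (n + 1) / CR n with hX_def
  have hXnorm : ∀ n, ‖X n‖ = D * q ^ n := by
    intro n
    rw [hX_def]
    simp only [norm_div, norm_mul, norm_pow, Complex.norm_real, Real.norm_eq_abs, hCR_def]
    rw [abs_of_pos hlam1, abs_of_pos hα1pos, hD_def, hq_def, norm_mul, div_pow]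
    have h1 : (0:ℝ) < α1 ^ (n+1) := by positivity
    have h2 : (0:ℝ) < α1 ^ n := by positivity
    field_simp
    ring
  have hX1 : ∀ n, ‖X n‖ < 1 := by
    intro n
    rw [hXnorm n]
    calc D * q ^ n ≤ D * 1 := by
          apply mul_le_mul_of_nonneg_left _ hD0
          exact pow_le_one₀ hq0.le hq1.le
      _ < 1 := by rwa [mul_one]
  have hXne : ∀ n, (1 : ℂ) + X n ≠ 0 := by
    intro n h
    have h2 := hX1 n
    have hx : X n = -1 := by linear_combination h
    rw [hx] at h2
    simp at h2
  -- Binet rearranged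
  have hBinet' : ∀ n : ℕ, (a (n + 1) : ℂ) = CR n * (1 + X n) := by
    intro n
    rw [hBinet (n + 1) (by omega), hX_def]
    have h := hCRne n
    field_simp
    rw [hCR_def]
    push_cast
    ring
  -- the doubly-indexed terms
  set T : ℕ → ℕ → ℂ := fun n k => z ^ (n + 1) * CR n ^ (-s) * (cbinom (-s) k * X n ^ k)
    with hT_def
  -- per-n binomial expansion
  have hRowN : ∀ n : ℕ, HasSum (fun k => T n k) (z ^ (n + 1) * ((a (n + 1) : ℂ)) ^ (-s)) := by
    intro n
    have hb := hasSum_cbinom (-s) (X n) (by exact hX1 n)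
    have h2 := hb.mul_left (z ^ (n + 1) * CR n ^ (-s))
    have h3 : (a (n + 1) : ℂ) ^ (-s) = CR n ^ (-s) * (1 + X n) ^ (-s) := by
      rw [hBinet' n]
      exact ofReal_mul_cpow' (hRpos n) (hXne n) (-s)
    rw [h3, ← mul_assoc]
    exact h2
  -- norm of terms
  have hTnorm : ∀ n k, ‖T n k‖
      = (lam1 ^ (-s.re) * ε) * ‖cbinom (-s) k‖ * D ^ k * (ε * q ^ k) ^ n := by
    intro n k
    rw [hT_def]
    simp only [norm_mul, norm_pow]
    have h1 : ‖CR n ^ (-s)‖ = (lam1 * α1 ^ (n + 1)) ^ (-s.re) := by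
      rw [hCR_def]
      rw [Complex.norm_cpow_eq_rpow_re_of_pos (hRpos n)]
      simp [Complex.neg_re]
    rw [h1, hXnorm n]
    have h2 : (lam1 * α1 ^ (n + 1)) ^ (-s.re) = lam1 ^ (-s.re) * A ^ (n + 1) := by
      rw [Real.mul_rpow hlam1.le (by positivity)]
      congr 1
      rw [hA_def, ← Real.rpow_natCast α1 (n + 1), ← Real.rpow_mul hα1pos.le,
        mul_comm ((n + 1 : ℕ) : ℝ) (-s.re), Real.rpow_mul hα1pos.le, Real.rpow_natCast]
    rw [h2, hε_def]
    ring
  -- summability of the norms over pairs (k, n)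
  have hεq1 : ∀ k : ℕ, ε * q ^ k < 1 := by
    intro k
    calc ε * q ^ k ≤ ε * 1 := by
          apply mul_le_mul_of_nonneg_left _ hε0.le
          exact pow_le_one₀ hq0.le hq1.le
      _ < 1 := by rwa [mul_one]
  have hεq0 : ∀ k : ℕ, 0 ≤ ε * q ^ k := fun k => by positivity
  have hrowsum : ∀ k : ℕ, Summable (fun n => ‖T n k‖) := by
    intro k
    have := ((summable_geometric_of_lt_one (hεq0 k) (hεq1 k)).mul_left
      ((lam1 ^ (-s.re) * ε) * ‖cbinom (-s) k‖ * D ^ k))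
    apply this.congr
    intro n
    rw [hTnorm n k]
  have htsumrow : ∀ k : ℕ, ∑' n, ‖T n k‖
      ≤ ((lam1 ^ (-s.re) * ε) * (1 - ε)⁻¹) * (‖cbinom (-s) k‖ * D ^ k) := by
    intro k
    have h1 : ∑' n, ‖T n k‖
        = ((lam1 ^ (-s.re) * ε) * ‖cbinom (-s) k‖ * D ^ k) * (1 - ε * q ^ k)⁻¹ := by
      rw [show (fun n => ‖T n k‖)
          = fun n => ((lam1 ^ (-s.re) * ε) * ‖cbinom (-s) k‖ * D ^ k)
            * (ε * q ^ k) ^ n from funext fun n => hTnorm n k]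
      rw [tsum_mul_left, tsum_geometric_of_lt_one (hεq0 k) (hεq1 k)]
    rw [h1]
    have h2 : (1 - ε * q ^ k)⁻¹ ≤ (1 - ε)⁻¹ := by
      apply inv_anti₀ (by linarith)
      have : ε * q ^ k ≤ ε := by
        calc ε * q ^ k ≤ ε * 1 := mul_le_mul_of_nonneg_left (pow_le_one₀ hq0.le hq1.le) hε0.le
          _ = ε := mul_one ε
      linarith
    have h3 : 0 ≤ (lam1 ^ (-s.re) * ε) * ‖cbinom (-s) k‖ * D ^ k := by
      have := Real.rpow_pos_of_pos hlam1 (-s.re)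
      have := norm_nonneg (cbinom (-s) k)
      positivity
    calc ((lam1 ^ (-s.re) * ε) * ‖cbinom (-s) k‖ * D ^ k) * (1 - ε * q ^ k)⁻¹
        ≤ ((lam1 ^ (-s.re) * ε) * ‖cbinom (-s) k‖ * D ^ k) * (1 - ε)⁻¹ :=
          mul_le_mul_of_nonneg_left h2 h3
      _ = ((lam1 ^ (-s.re) * ε) * (1 - ε)⁻¹) * (‖cbinom (-s) k‖ * D ^ k) := by ring
  have hsumAbs : Summable (fun p : ℕ × ℕ => ‖T p.2 p.1‖) := by
    rw [summable_prod_of_nonneg (fun p => norm_nonneg _)]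
    constructor
    · exact fun k => hrowsum k
    · apply Summable.of_nonneg_of_le
        (fun k => tsum_nonneg fun n => norm_nonneg _) htsumrow
      exact ((summable_cbinom_norm (-s) hD0 hD1).mul_left _)
  have hsumT : Summable (fun p : ℕ × ℕ => T p.2 p.1) := by
    apply Summable.of_norm
    simpa using hsumAbs
  -- the geometric ratios
  set W : ℕ → ℂ := fun k => z * (α1 : ℂ) ^ (-(s + (k : ℂ))) * α2 ^ k with hW_def
  have hWabs : ∀ k, ‖W k‖ = ε * q ^ k := by
    intro k
    rw [hW_def]
    simp only [norm_mul, norm_pow]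
    rw [Complex.norm_cpow_eq_rpow_re_of_pos hα1pos]
    have hre : (-(s + (k : ℂ))).re = -s.re + -(k : ℝ) := by
      simp [Complex.add_re, Complex.neg_re, Complex.natCast_re]
      ring
    rw [hre, Real.rpow_add hα1pos, hε_def, hA_def, hq_def, div_pow]
    rw [Real.rpow_neg hα1pos.le ((k : ℕ) : ℝ), Real.rpow_natCast]
    have : (0:ℝ) < α1 ^ k := by positivity
    field_simp
  have hW1 : ∀ k, ‖W k‖ < 1 := fun k => (hWabs k) ▸ hεq1 k
  have hW0 : ∀ k, W k ≠ 0 := by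
    intro k
    have hcp : (α1 : ℂ) ^ (-(s + (k : ℂ))) ≠ 0 := by
      rw [Ne, Complex.cpow_eq_zero_iff]
      simp [hα1C]
    simp only [hW_def]
    exact mul_ne_zero (mul_ne_zero hz0 hcp) (pow_ne_zero _ hα2ne)
  -- rewrite terms by W
  have hTW : ∀ n k, T n k
      = (cbinom (-s) k * (lam1 : ℂ) ^ (-s - (k : ℂ)) * lam2 ^ k) * W k ^ (n + 1) := by
    intro n k
    have e2 : CR n ^ (-s) = (lam1 : ℂ) ^ (-s) * (α1 : ℂ) ^ (((n + 1 : ℕ) : ℂ) * (-s)) := by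
      rw [show CR n = ((lam1 : ℝ) : ℂ) * ((α1 ^ (n + 1) : ℝ) : ℂ) by rw [hCR_def]; push_cast; ring,
        Complex.mul_cpow_ofReal_nonneg hlam1.le (pow_pos hα1pos (n + 1)).le,
        show ((α1 ^ (n + 1) : ℝ) : ℂ) = ((α1 : ℂ)) ^ (n + 1) by push_cast; ring,
        cpow_nat_pow' hα1pos (n + 1) (-s)]
    have e3 : CR n ^ k = (lam1 : ℂ) ^ k * (α1 : ℂ) ^ ((n + 1) * k) := by
      rw [show CR n = (lam1 : ℂ) * (α1 : ℂ) ^ (n + 1) by rw [hCR_def]; push_cast; ring,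
        mul_pow, ← pow_mul]
    have e4 : W k ^ (n + 1) = z ^ (n + 1) * (α1 : ℂ) ^ (((n + 1 : ℕ) : ℂ) * (-(s + (k : ℂ))))
        * α2 ^ (k * (n + 1)) := by
      rw [hW_def, mul_pow, mul_pow, ← Complex.cpow_nat_mul, ← pow_mul, mul_comm k (n+1)]
    have e5 : (lam1 : ℂ) ^ (-s - (k : ℂ)) = (lam1 : ℂ) ^ (-s) * ((lam1 : ℂ) ^ k)⁻¹ := by
      rw [sub_eq_add_neg, Complex.cpow_add _ _ hlam1C, Complex.cpow_neg (lam1:ℂ) ((k:ℕ):ℂ), Complex.cpow_natCast]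
    have e6 : (α1 : ℂ) ^ (((n + 1 : ℕ) : ℂ) * (-(s + (k : ℂ))))
        = (α1 : ℂ) ^ (((n + 1 : ℕ) : ℂ) * (-s)) * ((α1 : ℂ) ^ ((n + 1) * k))⁻¹ := by
      rw [show ((n + 1 : ℕ) : ℂ) * (-(s + (k : ℂ)))
          = ((n + 1 : ℕ) : ℂ) * (-s) + (-((((n + 1) * k : ℕ)) : ℂ)) by push_cast; ring,
        Complex.cpow_add _ _ hα1C, Complex.cpow_neg, Complex.cpow_natCast]
    rw [hT_def]
    simp only
    rw [hX_def]
    simp only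
    rw [div_pow, mul_pow, ← pow_mul, e2, e3, e4, e5, e6, mul_comm k (n+1)]
    field_simp
  -- per-k geometric sum
  have hRowK : ∀ k : ℕ, HasSum (fun n => T n k)
      (cbinom (-s) k * (lam1 : ℂ) ^ (-s - (k : ℂ)) * lam2 ^ k /
        (z⁻¹ * (α1 : ℂ) ^ (s + (k : ℂ)) * α2 ^ (-(k : ℤ)) - 1)) := by
    intro k
    have hg : HasSum (fun n : ℕ => W k ^ (n + 1)) (W k * (1 - W k)⁻¹) := by
      have h := (hasSum_geometric_of_norm_lt_one
        (by exact hW1 k)).mul_left (W k)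
      have heq : (fun n : ℕ => W k * W k ^ n) = fun n : ℕ => W k ^ (n + 1) := by
        funext n; rw [pow_succ]; ring
      rwa [heq] at h
    have hC := hg.mul_left (cbinom (-s) k * (lam1 : ℂ) ^ (-s - (k : ℂ)) * lam2 ^ k)
    have hTeq : (fun n : ℕ => (cbinom (-s) k * (lam1 : ℂ) ^ (-s - (k : ℂ)) * lam2 ^ k)
        * W k ^ (n + 1)) = fun n => T n k := funext fun n => (hTW n k).symm
    rw [hTeq] at hC
    have hW1' : W k ≠ 1 := by
      intro h
      have := hW1 k
      rw [h] at this
      simp at this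
    have h1W : (1 : ℂ) - W k ≠ 0 := sub_ne_zero.2 (Ne.symm hW1')
    have hVW : z⁻¹ * (α1 : ℂ) ^ (s + (k : ℂ)) * α2 ^ (-(k : ℤ)) = (W k)⁻¹ := by
      rw [hW_def]
      simp only
      rw [mul_inv, mul_inv, Complex.cpow_neg, inv_inv, zpow_neg, zpow_natCast]
    have hval : (cbinom (-s) k * (lam1 : ℂ) ^ (-s - (k : ℂ)) * lam2 ^ k)
        * (W k * (1 - W k)⁻¹)
        = cbinom (-s) k * (lam1 : ℂ) ^ (-s - (k : ℂ)) * lam2 ^ k / ((W k)⁻¹ - 1) := by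
      rw [div_eq_mul_inv]
      congr 1
      rw [show (W k)⁻¹ - 1 = (1 - W k) * (W k)⁻¹ by field_simp [hW0 k]]
      rw [mul_inv, inv_inv]
      ring
    rw [hVW]
    exact hval ▸ hC
  -- assembly
  have hTotal1 : HasSum (fun k : ℕ => cbinom (-s) k * (lam1 : ℂ) ^ (-s - (k : ℂ)) * lam2 ^ k /
        (z⁻¹ * (α1 : ℂ) ^ (s + (k : ℂ)) * α2 ^ (-(k : ℤ)) - 1))
      (∑' p : ℕ × ℕ, T p.2 p.1) :=
    hsumT.hasSum.prod_fiberwise (fun k => hRowK k)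
  refine ⟨hTotal1.summable, ?_⟩
  have hswap : Summable (fun p : ℕ × ℕ => T p.1 p.2) := hsumT.prod_symm
  have hTotal2 : HasSum (fun n : ℕ => z ^ (n + 1) * ((a (n + 1) : ℂ)) ^ (-s))
      (∑' p : ℕ × ℕ, T p.1 p.2) :=
    hswap.hasSum.prod_fiberwise (fun n => hRowN n)
  have hswapeq : ∑' p : ℕ × ℕ, T p.1 p.2 = ∑' p : ℕ × ℕ, T p.2 p.1 :=
    (Equiv.prodComm ℕ ℕ).tsum_eq (fun p : ℕ × ℕ => T p.2 p.1)
  rw [hTotal2.tsum_eq, hTotal1.tsum_eq]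
  exact hswapeq
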